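/- arXiv:2412.04605 — 2 statements merged into one kernel-verified Lean document; each statement's English description precedes it below -/
import Mathlib

section
/- Under no anticipation, conditional parallel trends, and overlap, the average treatment effect on the treated τ₀ = E[Y₂(1) − Y₂(0) | D = 1] is identified as τ₀ = E[D(ΔY − m₀(X))] / E[D], where ΔY = Y₂ − Y₁ and m₀(x) = E[ΔY | D = 0, X = x]. -/
open MeasureTheory Filter

/-- Identification of the ATT in the canonical difference-in-differences design:
under no anticipation, conditional parallel trends, and overlap,
`τ₀ = E[Y₂(1) − Y₂(0) | D = 1] = E[D(ΔY − m₀(X))] / E[D]`. -/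
theorem att_identification
    {Ω 𝓧 : Type*} [MeasurableSpace Ω] [MeasurableSpace 𝓧]
    (μ : Measure Ω) [IsProbabilityMeasure μ]
    (Y10 Y11 Y20 Y21 D : Ω → ℝ) (X : Ω → 𝓧) (m₀ : 𝓧 → ℝ)
    (hD : ∀ ω, D ω = 0 ∨ D ω = 1)
    (hmD : Measurable D) (hmX : Measurable X) (hmm₀ : Measurable m₀)
    (hInt : Integrable Y10 μ ∧ Integrable Y11 μ ∧ Integrable Y20 μ ∧ Integrable Y21 μ)
    (hIntm : Integrable (fun ω => m₀ (X ω)) μ)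
    -- realized outcomes
    (Y1 Y2 : Ω → ℝ)
    (hY1 : ∀ ω, Y1 ω = Y10 ω)
    (hY2 : ∀ ω, Y2 ω = D ω * Y21 ω + (1 - D ω) * Y20 ω)
    -- σ-algebra generated by (D, X)
    (mDX : MeasurableSpace Ω)
    (hmDX : mDX = MeasurableSpace.comap (fun ω => (D ω, X ω)) inferInstance)
    -- (i) no anticipation
    (hNA : ∀ᵐ ω ∂μ, D ω = 1 → (μ[Y10|mDX]) ω = (μ[Y11|mDX]) ω)
    -- (ii) conditional parallel trends: the conditional expectation of
    -- Y₂(0) − Y₁(0) given (D, X) depends on X only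
    (hPT : ∃ g : 𝓧 → ℝ, Measurable g ∧
      μ[fun ω => Y20 ω - Y10 ω|mDX] =ᵐ[μ] fun ω => g (X ω))
    -- (iii) overlap
    (ε : ℝ) (hε : 0 < ε)
    (hover1 : ε < (μ {ω | D ω = 1}).toReal)
    (hover2 : ∀ᵐ ω ∂μ, (μ[D|MeasurableSpace.comap X inferInstance]) ω ≤ 1 - ε)
    -- m₀ is the conditional mean of ΔY = Y₂ − Y₁ in the control group
    (hm₀ : ∀ᵐ ω ∂μ, D ω = 0 →
      (μ[fun ω' => Y2 ω' - Y1 ω'|mDX]) ω = m₀ (X ω)) :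
    (∫ ω, D ω * (Y21 ω - Y20 ω) ∂μ) / (∫ ω, D ω ∂μ)
      = (∫ ω, D ω * (Y2 ω - Y1 ω - m₀ (X ω)) ∂μ) / (∫ ω, D ω ∂μ) := by
  rename_i mΩ m𝓧 hprob
  obtain ⟨hI10, hI11, hI20, hI21⟩ := hInt
  obtain ⟨g, hmg, hPTg⟩ := hPT
  -- basic measurability facts
  have hle : mDX ≤ mΩ := by
    rw [hmDX]; exact (hmD.prodMk hmX).comap_le
  have hpairDX : Measurable[mDX] (fun ω => (D ω, X ω)) := by
    rw [hmDX]; exact comap_measurable _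
  have hDmDX : Measurable[mDX] D := measurable_fst.comp hpairDX
  haveI : SigmaFinite (μ.trim hle) := by
    have : IsFiniteMeasure (μ.trim hle) := isFiniteMeasure_trim hle
    infer_instance
  set mX : MeasurableSpace Ω := MeasurableSpace.comap X inferInstance with hmXdef
  have hleX : mX ≤ mΩ := hmX.comap_le
  have hXmX : Measurable[mX] X := comap_measurable _
  haveI : SigmaFinite (μ.trim hleX) := by
    have : IsFiniteMeasure (μ.trim hleX) := isFiniteMeasure_trim hleX
    infer_instance
  have hDbd : ∃ C, ∀ ω, ‖D ω‖ ≤ C := by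
    refine ⟨1, fun ω => ?_⟩
    rcases hD ω with h | h <;> simp [h]
  have hmul : ∀ {f : Ω → ℝ}, Integrable f μ → Integrable (fun ω => D ω * f ω) μ :=
    fun {f} hf => by
      obtain ⟨C, hC⟩ := hDbd
      exact hf.bdd_mul hmD.aestronglyMeasurable (Filter.Eventually.of_forall hC)
  have hID : Integrable D μ := by
    have := hmul (integrable_const (1 : ℝ)); simpa using this
  -- integrability of Y2 - Y1
  have hIΔ : Integrable (fun ω => Y2 ω - Y1 ω) μ := by
    have : Integrable (fun ω => D ω * Y21 ω + (1 - D ω) * Y20 ω - Y10 ω) μ := by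
      refine Integrable.sub (Integrable.add (hmul hI21) ?_) hI10
      refine hI20.bdd_mul (c := 2) (Measurable.aestronglyMeasurable (by fun_prop)) ?_
      refine Filter.Eventually.of_forall fun ω => ?_
      rcases hD ω with h | h <;> simp [h] <;> norm_num
    exact this.congr (Filter.Eventually.of_forall fun ω => by simp [hY2, hY1])
  set f : Ω → ℝ := fun ω => Y20 ω - Y10 ω with hfdef
  have hIf : Integrable f μ := hI20.sub hI10
  -- g ∘ X is integrable
  have hIgX : Integrable (fun ω => g (X ω)) μ :=
    (integrable_condExp (m := mDX)).congr hPTg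
  -- Step A : a.e. on {D = 0}, g ∘ X = m₀ ∘ X
  have hs : MeasurableSet[mDX] {ω | D ω = 0} := hDmDX (measurableSet_singleton 0)
  have hindeq : ({ω | D ω = 0}).indicator (fun ω => Y2 ω - Y1 ω)
      = ({ω | D ω = 0}).indicator f := by
    funext ω
    by_cases hmem : ω ∈ {ω | D ω = 0}
    · have hD0 : D ω = 0 := hmem
      simp only [Set.indicator_of_mem hmem, hY2, hY1, hfdef, hD0]; ring
    · simp [Set.indicator_of_notMem hmem]
  have hcondind1 := condExp_indicator (μ := μ) (m := mDX) hIΔ hs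
  have hcondind2 := condExp_indicator (μ := μ) (m := mDX) hIf hs
  rw [hindeq] at hcondind1
  have hzero : ∀ᵐ ω ∂μ, D ω = 0 → g (X ω) = m₀ (X ω) := by
    filter_upwards [hcondind1.symm.trans hcondind2, hPTg, hm₀] with ω h1 h2 h3 hD0
    have hmem : ω ∈ {ω | D ω = 0} := hD0
    rw [Set.indicator_of_mem hmem, Set.indicator_of_mem hmem] at h1
    rw [← h2, ← h1, h3 hD0]
  -- Step B : overlap implies g ∘ X = m₀ ∘ X a.e.
  set h : Ω → ℝ := fun ω => |g (X ω) - m₀ (X ω)| with hhdef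
  have hIh : Integrable h μ := (hIgX.sub hIntm).abs
  have hhmX : StronglyMeasurable[mX] h :=
    Measurable.stronglyMeasurable
      ((measurable_abs.comp (hmg.sub hmm₀)).comp hXmX)
  have hprod0 : (fun ω => h ω * (1 - D ω)) =ᵐ[μ] 0 := by
    filter_upwards [hzero] with ω hz
    rcases hD ω with h0 | h1
    · simp [hhdef, hz h0]
    · simp [h1]
  have hIprod : Integrable (h * fun ω => 1 - D ω) μ :=
    (integrable_zero _ _ _).congr hprod0.symm
  have hI1D : Integrable (fun ω => 1 - D ω) μ := (integrable_const (1 : ℝ)).sub hID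
  have hpull := condExp_mul_of_stronglyMeasurable_left (μ := μ) hhmX hIprod hI1D
  have hIpullr : Integrable (h * μ[fun ω => 1 - D ω|mX]) μ :=
    integrable_condExp.congr hpull
  have hcesub : μ[fun ω => 1 - D ω|mX] =ᵐ[μ] fun ω => 1 - (μ[D|mX]) ω := by
    have h1 := condExp_sub (μ := μ) (m := mX) (integrable_const (1 : ℝ)) hID
    have h2 : μ[fun _ : Ω => (1 : ℝ)|mX] = fun _ => (1 : ℝ) :=
      condExp_const (μ := μ) hleX (1 : ℝ)
    filter_upwards [h1] with ω hω1
    have e : (fun ω => (1 : ℝ) - D ω) = (fun _ : Ω => (1:ℝ)) - D := rfl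
    rw [e, hω1, Pi.sub_apply, h2]
  have hint_eq : ∫ ω, h ω * (μ[fun ω => 1 - D ω|mX]) ω ∂μ = 0 := by
    have e1 : ∫ ω, h ω * (μ[fun ω => 1 - D ω|mX]) ω ∂μ
        = ∫ ω, (μ[h * fun ω => 1 - D ω|mX]) ω ∂μ :=
      integral_congr_ae hpull.symm
    have e2 : ∫ ω, (μ[h * fun ω => 1 - D ω|mX]) ω ∂μ
        = ∫ ω, (h * fun ω => 1 - D ω) ω ∂μ := integral_condExp hleX
    have e3 : ∫ ω, (h * fun ω => 1 - D ω) ω ∂μ = 0 := by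
      have : ∫ ω, (h * fun ω => 1 - D ω) ω ∂μ = ∫ ω, (0 : Ω → ℝ) ω ∂μ :=
        integral_congr_ae hprod0
      simpa using this
    rw [e1, e2, e3]
  have hεh : ∫ ω, ε * h ω ∂μ ≤ 0 := by
    rw [← hint_eq]
    refine integral_mono_ae (hIh.const_mul ε) ?_ ?_
    · exact hIpullr.congr (Filter.Eventually.of_forall fun ω => rfl)
    · filter_upwards [hover2, hcesub] with ω h2 hsub
      have hnn : 0 ≤ h ω := abs_nonneg _
      have : ε ≤ (μ[fun ω => 1 - D ω|mX]) ω := by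
        rw [hsub]; linarith [h2]
      calc ε * h ω ≤ (μ[fun ω => 1 - D ω|mX]) ω * h ω :=
            mul_le_mul_of_nonneg_right this hnn
        _ = h ω * (μ[fun ω => 1 - D ω|mX]) ω := mul_comm _ _
  have hh0 : h =ᵐ[μ] 0 := by
    have hnn : 0 ≤ᵐ[μ] fun ω => ε * h ω :=
      Filter.Eventually.of_forall fun ω => mul_nonneg hε.le (abs_nonneg _)
    have hint0 : ∫ ω, ε * h ω ∂μ = 0 :=
      le_antisymm hεh (integral_nonneg_of_ae hnn)
    have := (integral_eq_zero_iff_of_nonneg_ae hnn (hIh.const_mul ε)).mp hint0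
    filter_upwards [this] with ω hω
    have : ε * h ω = 0 := hω
    have := mul_eq_zero.mp this
    rcases this with h' | h'
    · exact absurd h' (ne_of_gt hε)
    · exact h'
  have hgm : (fun ω => g (X ω)) =ᵐ[μ] fun ω => m₀ (X ω) := by
    filter_upwards [hh0] with ω hω
    have : |g (X ω) - m₀ (X ω)| = 0 := hω
    have := abs_eq_zero.mp this
    linarith
  -- Step C : the key moment equality  E[D f] = E[D m₀(X)]
  have hDsm : StronglyMeasurable[mDX] D := hDmDX.stronglyMeasurable
  have hpull2 := condExp_mul_of_stronglyMeasurable_left (μ := μ) hDsm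
    (show Integrable (D * f) μ from (hmul hIf).congr
      (Filter.Eventually.of_forall fun ω => rfl)) hIf
  have key : ∫ ω, D ω * f ω ∂μ = ∫ ω, D ω * m₀ (X ω) ∂μ := by
    have e1 : ∫ ω, D ω * f ω ∂μ = ∫ ω, (μ[D * f|mDX]) ω ∂μ :=
      (integral_condExp hle).symm
    have e2 : ∫ ω, (μ[D * f|mDX]) ω ∂μ = ∫ ω, D ω * (μ[f|mDX]) ω ∂μ :=
      integral_congr_ae hpull2
    have e3 : ∫ ω, D ω * (μ[f|mDX]) ω ∂μ = ∫ ω, D ω * m₀ (X ω) ∂μ := by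
      refine integral_congr_ae ?_
      filter_upwards [hPTg, hgm] with ω h1 h2
      rw [h1, h2]
    rw [e1, e2, e3]
  -- Step D : conclude
  congr 1
  have hptw : ∀ ω, D ω * (Y2 ω - Y1 ω - m₀ (X ω))
      = D ω * (Y21 ω - Y10 ω - m₀ (X ω)) := by
    intro ω
    rcases hD ω with h0 | h1
    · simp [h0]
    · simp [hY2, hY1, h1]
  rw [show (fun ω => D ω * (Y2 ω - Y1 ω - m₀ (X ω)))
      = fun ω => D ω * (Y21 ω - Y10 ω - m₀ (X ω)) from funext hptw]
  have hIm : Integrable (fun ω => D ω * m₀ (X ω)) μ := hmul hIntm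
  have expandL : ∫ ω, D ω * (Y21 ω - Y20 ω) ∂μ
      = ∫ ω, D ω * Y21 ω ∂μ - ∫ ω, D ω * Y20 ω ∂μ := by
    have s1 : ∫ ω, (D ω * Y21 ω - D ω * Y20 ω) ∂μ
        = ∫ ω, D ω * Y21 ω ∂μ - ∫ ω, D ω * Y20 ω ∂μ := by
      exact integral_sub (hmul hI21) (hmul hI20)
    rw [← s1]
    exact integral_congr_ae (Filter.Eventually.of_forall fun ω => by ring)
  have expandR : ∫ ω, D ω * (Y21 ω - Y10 ω - m₀ (X ω)) ∂μ
      = ∫ ω, D ω * Y21 ω ∂μ - ∫ ω, D ω * Y10 ω ∂μ - ∫ ω, D ω * m₀ (X ω) ∂μ := by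
    have hIA : Integrable (fun ω => D ω * Y21 ω - D ω * Y10 ω) μ :=
      (hmul hI21).sub (hmul hI10)
    have s1 : ∫ ω, (D ω * Y21 ω - D ω * Y10 ω) ∂μ
        = ∫ ω, D ω * Y21 ω ∂μ - ∫ ω, D ω * Y10 ω ∂μ := by
      exact integral_sub (hmul hI21) (hmul hI10)
    have s2 : ∫ ω, ((D ω * Y21 ω - D ω * Y10 ω) - D ω * m₀ (X ω)) ∂μ
        = ∫ ω, (D ω * Y21 ω - D ω * Y10 ω) ∂μ - ∫ ω, D ω * m₀ (X ω) ∂μ := by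
      exact integral_sub hIA hIm
    have s0 : ∫ ω, D ω * (Y21 ω - Y10 ω - m₀ (X ω)) ∂μ
        = ∫ ω, ((D ω * Y21 ω - D ω * Y10 ω) - D ω * m₀ (X ω)) ∂μ :=
      integral_congr_ae (Filter.Eventually.of_forall fun ω => by ring)
    rw [s0, s2, s1]
  have keyf : ∫ ω, D ω * (Y20 ω - Y10 ω) ∂μ = ∫ ω, D ω * m₀ (X ω) ∂μ := key
  have expandK : ∫ ω, D ω * (Y20 ω - Y10 ω) ∂μ
      = ∫ ω, D ω * Y20 ω ∂μ - ∫ ω, D ω * Y10 ω ∂μ := by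
    have s1 : ∫ ω, (D ω * Y20 ω - D ω * Y10 ω) ∂μ
        = ∫ ω, D ω * Y20 ω ∂μ - ∫ ω, D ω * Y10 ω ∂μ := by
      exact integral_sub (hmul hI20) (hmul hI10)
    rw [← s1]
    exact integral_congr_ae (Filter.Eventually.of_forall fun ω => by ring)
  rw [expandK] at keyf
  rw [expandL, expandR]
  linarith
end

section
/- Conditional Slutsky lemma: Let (Pₙ) be a sequence of random probability measures on ℝ² (measurable with respect to the data) with marginals Pₙᵁ, Pₙⱽ. If d_BL(Pₙᵁ, Pᵁ) → 0 in probability for a fixed probability measure Pᵁ on ℝ, and d_BL(Pₙⱽ, δ_c) → 0 in probability for a constant c, then d_BL(L(Uₙ + Vₙ | Pₙ), L(Uₙ + c | Pₙ)) → 0 and d_BL(L(Uₙ·Vₙ | Pₙ), L(c·Uₙ | Pₙ)) → 0 in probability, where (Uₙ,Vₙ) | Pₙ ∼ Pₙ. -/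
open MeasureTheory Filter

/-- The bounded Lipschitz distance between two (probability) measures on a
metric space: the supremum of `|∫ f dP − ∫ f dQ|` over functions `f` with
`sup|f| + Lip(f) ≤ 1`. -/
noncomputable def dBL {E : Type*} [MeasurableSpace E] [PseudoMetricSpace E]
    (P Q : Measure E) : ℝ :=
  sSup {r : ℝ | ∃ (f : E → ℝ) (a b : NNReal),
    (∀ x, |f x| ≤ a) ∧ LipschitzWith b f ∧ (a : ℝ) + (b : ℝ) ≤ 1 ∧
    r = |(∫ x, f x ∂P) - ∫ x, f x ∂Q|}

set_option linter.unusedSectionVars false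
set_option linter.unusedVariables false

section aux
variable {E : Type*} [MeasurableSpace E] [PseudoMetricSpace E]
  (P Q : Measure E) [IsProbabilityMeasure P] [IsProbabilityMeasure Q]

lemma dBL_set_bddAbove : BddAbove {r : ℝ | ∃ (f : E → ℝ) (a b : NNReal),
    (∀ x, |f x| ≤ a) ∧ LipschitzWith b f ∧ (a : ℝ) + (b : ℝ) ≤ 1 ∧
    r = |(∫ x, f x ∂P) - ∫ x, f x ∂Q|} := by
  refine ⟨2, ?_⟩
  rintro r ⟨f, a, b, h1, h2, h3, rfl⟩
  have ha1 : (a : ℝ) ≤ 1 := by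
    have : (0:ℝ) ≤ b := b.coe_nonneg
    linarith
  have hP : ‖∫ x, f x ∂P‖ ≤ (a:ℝ) := by
    have := norm_integral_le_of_norm_le_const (μ := P) (f := f) (C := (a:ℝ))
      (Filter.Eventually.of_forall (fun x => by simpa using h1 x))
    simpa using this
  have hQ : ‖∫ x, f x ∂Q‖ ≤ (a:ℝ) := by
    have := norm_integral_le_of_norm_le_const (μ := Q) (f := f) (C := (a:ℝ))
      (Filter.Eventually.of_forall (fun x => by simpa using h1 x))
    simpa using this
  rw [Real.norm_eq_abs] at hP hQ
  calc |(∫ x, f x ∂P) - ∫ x, f x ∂Q| ≤ |∫ x, f x ∂P| + |∫ x, f x ∂Q| := abs_sub _ _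
    _ ≤ (a:ℝ) + (a:ℝ) := add_le_add hP hQ
    _ ≤ 2 := by linarith

lemma zero_mem_dBL_set : (0:ℝ) ∈ {r : ℝ | ∃ (f : E → ℝ) (a b : NNReal),
    (∀ x, |f x| ≤ a) ∧ LipschitzWith b f ∧ (a : ℝ) + (b : ℝ) ≤ 1 ∧
    r = |(∫ x, f x ∂P) - ∫ x, f x ∂Q|} := by
  refine ⟨fun _ => 0, 0, 0, fun x => by simp, ?_, by norm_num, by simp⟩
  simpa using (LipschitzWith.const (0:ℝ))

lemma dBL_nonneg : 0 ≤ dBL P Q :=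
  le_csSup (dBL_set_bddAbove P Q) (zero_mem_dBL_set P Q)

lemma le_dBL (f : E → ℝ) (a b : NNReal) (h1 : ∀ x, |f x| ≤ a)
    (h2 : LipschitzWith b f) (h3 : (a:ℝ) + (b:ℝ) ≤ 1) :
    |(∫ x, f x ∂P) - ∫ x, f x ∂Q| ≤ dBL P Q :=
  le_csSup (dBL_set_bddAbove P Q) ⟨f, a, b, h1, h2, h3, rfl⟩

lemma dBL_le_of_forall (K : ℝ) (hK : 0 ≤ K)
    (h : ∀ (f : E → ℝ) (a b : NNReal), (∀ x, |f x| ≤ a) → LipschitzWith b f →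
      (a:ℝ) + (b:ℝ) ≤ 1 → |(∫ x, f x ∂P) - ∫ x, f x ∂Q| ≤ K) : dBL P Q ≤ K :=
  Real.sSup_le (by rintro r ⟨f, a, b, h1, h2, h3, rfl⟩; exact h f a b h1 h2 h3) hK

end aux

noncomputable def gfun (c : ℝ) : ℝ → ℝ := fun v => min 1 (dist v c)

lemma gfun_lip (c : ℝ) : LipschitzWith 1 (gfun c) :=
  (LipschitzWith.dist_left c).const_min 1

lemma gfun_nonneg (c v : ℝ) : 0 ≤ gfun c v := le_min one_pos.le dist_nonneg

lemma gfun_le_one (c v : ℝ) : gfun c v ≤ 1 := min_le_left _ _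

lemma half_lip {f : ℝ → ℝ} {K : NNReal} (h : LipschitzWith K f) :
    LipschitzWith (K / 2) (fun x => f x / 2) := by
  intro x y
  have h2 := h x y
  simp only [edist_dist, Real.dist_eq] at *
  rw [div_sub_div_same, abs_div, abs_two]
  calc ENNReal.ofReal (|f x - f y| / 2)
      = ENNReal.ofReal (|f x - f y|) / ENNReal.ofReal 2 := by
        rw [ENNReal.ofReal_div_of_pos (by norm_num)]
    _ ≤ (K * ENNReal.ofReal |x - y|) / ENNReal.ofReal 2 := by gcongr
    _ = (↑(K / 2) : ENNReal) * ENNReal.ofReal |x - y| := by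
        rw [ENNReal.coe_div (by norm_num), ENNReal.ofReal_ofNat, ENNReal.coe_ofNat,
          ENNReal.div_eq_inv_mul, ENNReal.div_eq_inv_mul]
        ring

lemma gfun_cont (c : ℝ) : Continuous (gfun c) := (gfun_lip c).continuous

-- pointwise bounds
lemma key_pointwise {f : ℝ → ℝ} {a b : NNReal} (h1 : ∀ x, |f x| ≤ a)
    (h2 : LipschitzWith b f) (h3 : (a:ℝ) + (b:ℝ) ≤ 1) (x y : ℝ) :
    |f x - f y| ≤ min 2 (dist x y) := by
  have ha : (a:ℝ) ≤ 1 := by have := b.coe_nonneg; linarith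
  have hb : (b:ℝ) ≤ 1 := by have := a.coe_nonneg; linarith
  refine le_min ?_ ?_
  · calc |f x - f y| ≤ |f x| + |f y| := abs_sub _ _
      _ ≤ (a:ℝ) + (a:ℝ) := add_le_add (h1 x) (h1 y)
      _ ≤ 2 := by linarith
  · calc |f x - f y| = dist (f x) (f y) := (Real.dist_eq _ _).symm
      _ ≤ (b:ℝ) * dist x y := h2.dist_le_mul x y
      _ ≤ dist x y := by nlinarith [(dist_nonneg : (0:ℝ) ≤ dist x y)]

lemma min_two_le (d : ℝ) (hd : 0 ≤ d) : min 2 d ≤ 2 * min 1 d := by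
  rcases le_total d 1 with h | h
  · rw [min_eq_right (by linarith), min_eq_right h]; linarith
  · rw [min_eq_left h]; have : min (2:ℝ) d ≤ 2 := min_le_left _ _; linarith

lemma dBL_sum_le (μ : Measure (ℝ × ℝ)) [IsProbabilityMeasure μ] (c : ℝ) :
    dBL (μ.map (fun p => p.1 + p.2)) (μ.map (fun p => p.1 + c)) ≤
      4 * dBL (μ.map Prod.snd) (Measure.dirac c) := by
  have m1 : Measurable (fun p : ℝ × ℝ => p.1 + p.2) := measurable_fst.add measurable_snd
  have m2 : Measurable (fun p : ℝ × ℝ => p.1 + c) := measurable_fst.add_const c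
  haveI : IsProbabilityMeasure (μ.map (fun p : ℝ × ℝ => p.1 + p.2)) :=
    Measure.isProbabilityMeasure_map m1.aemeasurable
  haveI : IsProbabilityMeasure (μ.map (fun p : ℝ × ℝ => p.1 + c)) :=
    Measure.isProbabilityMeasure_map m2.aemeasurable
  haveI : IsProbabilityMeasure (μ.map (Prod.snd : ℝ × ℝ → ℝ)) :=
    Measure.isProbabilityMeasure_map measurable_snd.aemeasurable
  set ν := μ.map (Prod.snd : ℝ × ℝ → ℝ) with hν
  apply dBL_le_of_forall
  · exact mul_nonneg (by norm_num) (dBL_nonneg _ _)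
  intro f a b h1 h2 h3
  rw [integral_map m1.aemeasurable h2.continuous.aestronglyMeasurable,
      integral_map m2.aemeasurable h2.continuous.aestronglyMeasurable]
  have intF : Integrable (fun p : ℝ × ℝ => f (p.1 + p.2)) μ :=
    (integrable_const (a:ℝ)).mono'
      ((h2.continuous.comp (continuous_fst.add continuous_snd)).aestronglyMeasurable)
      (Filter.Eventually.of_forall fun p => by simpa using h1 _)
  have intG : Integrable (fun p : ℝ × ℝ => f (p.1 + c)) μ :=
    (integrable_const (a:ℝ)).mono'
      ((h2.continuous.comp (continuous_fst.add continuous_const)).aestronglyMeasurable)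
      (Filter.Eventually.of_forall fun p => by simpa using h1 _)
  have intH : Integrable (fun p : ℝ × ℝ => 2 * gfun c p.2) μ :=
    (integrable_const (2:ℝ)).mono'
      ((continuous_const.mul ((gfun_cont c).comp continuous_snd)).aestronglyMeasurable)
      (Filter.Eventually.of_forall fun p => by
        rw [Real.norm_eq_abs, abs_of_nonneg (mul_nonneg (by norm_num) (gfun_nonneg c p.2))]
        have := gfun_le_one c p.2; linarith)
  have pw : ∀ p : ℝ × ℝ, |f (p.1 + p.2) - f (p.1 + c)| ≤ 2 * gfun c p.2 := by
    intro p
    calc |f (p.1 + p.2) - f (p.1 + c)| ≤ min 2 (dist (p.1 + p.2) (p.1 + c)) :=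
          key_pointwise h1 h2 h3 _ _
      _ = min 2 (dist p.2 c) := by rw [Real.dist_eq, Real.dist_eq]; ring_nf
      _ ≤ 2 * min 1 (dist p.2 c) := min_two_le _ dist_nonneg
      _ = 2 * gfun c p.2 := rfl
  have step1 : |(∫ p, f (p.1 + p.2) ∂μ) - ∫ p, f (p.1 + c) ∂μ| ≤
      ∫ p, 2 * gfun c p.2 ∂μ := by
    rw [← integral_sub intF intG]
    calc |∫ p, (f (p.1 + p.2) - f (p.1 + c)) ∂μ| ≤
        ∫ p, |f (p.1 + p.2) - f (p.1 + c)| ∂μ := by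
          simpa [Real.norm_eq_abs] using
            norm_integral_le_integral_norm (fun p : ℝ × ℝ => f (p.1+p.2) - f (p.1+c)) (μ := μ)
      _ ≤ ∫ p, 2 * gfun c p.2 ∂μ := integral_mono (intF.sub intG).abs intH
          (fun p => pw p)
  have step2 : ∫ p : ℝ × ℝ, 2 * gfun c p.2 ∂μ = 2 * ∫ v, gfun c v ∂ν := by
    rw [hν, integral_map measurable_snd.aemeasurable (gfun_cont c).aestronglyMeasurable,
      integral_const_mul]
  have intg : Integrable (gfun c) ν :=
    (integrable_const (1:ℝ)).mono' (gfun_cont c).aestronglyMeasurable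
      (Filter.Eventually.of_forall fun v => by
        rw [Real.norm_eq_abs, abs_of_nonneg (gfun_nonneg c v)]; exact gfun_le_one c v)
  have step3 : ∫ v, gfun c v ∂ν ≤ 2 * dBL ν (Measure.dirac c) := by
    have hd : |(∫ v, gfun c v / 2 ∂ν) - ∫ v, gfun c v / 2 ∂(Measure.dirac c)| ≤
        dBL ν (Measure.dirac c) := by
      apply le_dBL ν (Measure.dirac c) (fun v => gfun c v / 2) 2⁻¹ 2⁻¹
      · intro v
        rw [abs_of_nonneg (div_nonneg (gfun_nonneg c v) (by norm_num))]
        have := gfun_le_one c v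
        push_cast; linarith
      · have := half_lip (gfun_lip c)
        simpa using this
      · push_cast; norm_num
    have hdir : ∫ v, gfun c v / 2 ∂(Measure.dirac c) = 0 := by
      rw [integral_dirac' _ _ ((gfun_cont c).div_const 2).stronglyMeasurable]
      simp [gfun]
    have hnn : 0 ≤ ∫ v, gfun c v / 2 ∂ν :=
      integral_nonneg fun v => by have := gfun_nonneg c v; positivity
    rw [hdir, sub_zero, abs_of_nonneg hnn] at hd
    have : ∫ v, gfun c v / 2 ∂ν = (∫ v, gfun c v ∂ν) / 2 := by
      rw [integral_div]
    rw [this] at hd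
    linarith
  calc |(∫ p, f (p.1 + p.2) ∂μ) - ∫ p, f (p.1 + c) ∂μ| ≤ ∫ p, 2 * gfun c p.2 ∂μ := step1
    _ = 2 * ∫ v, gfun c v ∂ν := step2
    _ ≤ 2 * (2 * dBL ν (Measure.dirac c)) := by
        have := step3; linarith
    _ = 4 * dBL ν (Measure.dirac c) := by ring

noncomputable def hfun (M : ℝ) : ℝ → ℝ := fun u => min 1 (max 0 (|u| - M))

lemma hfun_nonneg (M u : ℝ) : 0 ≤ hfun M u := le_min one_pos.le (le_max_left _ _)
lemma hfun_le_one (M u : ℝ) : hfun M u ≤ 1 := min_le_left _ _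

lemma hfun_lip (M : ℝ) : LipschitzWith 1 (hfun M) := by
  apply LipschitzWith.of_dist_le_mul
  intro x y
  rw [Real.dist_eq, Real.dist_eq, NNReal.coe_one, one_mul]
  calc |hfun M x - hfun M y| ≤ max |1 - 1| |max 0 (|x| - M) - max 0 (|y| - M)| :=
        abs_min_sub_min_le_max _ _ _ _
    _ = |max 0 (|x| - M) - max 0 (|y| - M)| := by simp
    _ = |max (|x| - M) 0 - max (|y| - M) 0| := by rw [max_comm, max_comm 0]
    _ ≤ |(|x| - M) - (|y| - M)| := abs_max_sub_max_le_abs _ _ _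
    _ = |(|x|) - (|y|)| := by ring_nf
    _ ≤ |x - y| := abs_abs_sub_abs_le_abs_sub _ _

lemma hfun_cont (M : ℝ) : Continuous (hfun M) := (hfun_lip M).continuous

lemma integral_le_of_dBL (ν₁ ν₂ : Measure ℝ) [IsProbabilityMeasure ν₁]
    [IsProbabilityMeasure ν₂] (g : ℝ → ℝ) (hg0 : ∀ v, 0 ≤ g v) (hg1 : ∀ v, g v ≤ 1)
    (hlip : LipschitzWith 1 g) :
    ∫ v, g v ∂ν₁ ≤ (∫ v, g v ∂ν₂) + 2 * dBL ν₁ ν₂ := by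
  have hd : |(∫ v, g v / 2 ∂ν₁) - ∫ v, g v / 2 ∂ν₂| ≤ dBL ν₁ ν₂ := by
    apply le_dBL ν₁ ν₂ (fun v => g v / 2) 2⁻¹ 2⁻¹
    · intro v
      rw [abs_of_nonneg (div_nonneg (hg0 v) (by norm_num))]
      have := hg1 v; push_cast; linarith
    · simpa using half_lip hlip
    · push_cast; norm_num
  rw [integral_div, integral_div] at hd
  have := (abs_le.1 hd).2
  linarith [(abs_le.1 hd).1]

lemma gint_le (ν : Measure ℝ) [IsProbabilityMeasure ν] (c : ℝ) :
    ∫ v, gfun c v ∂ν ≤ 2 * dBL ν (Measure.dirac c) := by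
  have := integral_le_of_dBL ν (Measure.dirac c) (gfun c) (gfun_nonneg c)
    (gfun_le_one c) (gfun_lip c)
  have hdir : ∫ v, gfun c v ∂(Measure.dirac c) = 0 := by
    rw [integral_dirac' _ _ (gfun_cont c).stronglyMeasurable]
    simp [gfun]
  rw [hdir] at this; linarith

lemma key2 (M : ℝ) (hM : 0 ≤ M) (u d : ℝ) (hd : 0 ≤ d) :
    min 2 (|u| * d) ≤ max 2 (M + 1) * min 1 d + 2 * hfun M u := by
  have hK2 : (2:ℝ) ≤ max 2 (M + 1) := le_max_left _ _
  have hKM : M + 1 ≤ max 2 (M + 1) := le_max_right _ _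
  have hh0 := hfun_nonneg M u
  have hg0 : (0:ℝ) ≤ min 1 d := le_min one_pos.le hd
  rcases le_total (|u|) (M + 1) with hu | hu
  · rcases le_total d 1 with hd1 | hd1
    · have h1 : min 2 (|u| * d) ≤ |u| * d := min_le_right _ _
      have h2 : |u| * d ≤ (M + 1) * d := mul_le_mul_of_nonneg_right hu hd
      have h3 : min 1 d = d := min_eq_right hd1
      nlinarith
    · have h3 : min 1 d = 1 := min_eq_left hd1
      have h1 : min 2 (|u| * d) ≤ 2 := min_le_left _ _
      rw [h3]
      nlinarith
  · have : hfun M u = 1 := by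
      have : (1:ℝ) ≤ |u| - M := by linarith
      have h4 : max 0 (|u| - M) = |u| - M := max_eq_right (by linarith)
      rw [hfun, h4]
      exact min_eq_left this
    rw [this]
    have h1 : min 2 (|u| * d) ≤ 2 := min_le_left _ _
    nlinarith

lemma dBL_prod_le (μ : Measure (ℝ × ℝ)) [IsProbabilityMeasure μ] (PU : Measure ℝ)
    [IsProbabilityMeasure PU] (c M : ℝ) (hM : 0 ≤ M) :
    dBL (μ.map (fun p => p.1 * p.2)) (μ.map (fun p => c * p.1)) ≤
      2 * max 2 (M + 1) * dBL (μ.map Prod.snd) (Measure.dirac c) +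
      4 * dBL (μ.map Prod.fst) PU + 2 * ∫ u, hfun M u ∂PU := by
  have m1 : Measurable (fun p : ℝ × ℝ => p.1 * p.2) := measurable_fst.mul measurable_snd
  have m2 : Measurable (fun p : ℝ × ℝ => c * p.1) := measurable_fst.const_mul c
  haveI : IsProbabilityMeasure (μ.map (fun p : ℝ × ℝ => p.1 * p.2)) :=
    Measure.isProbabilityMeasure_map m1.aemeasurable
  haveI : IsProbabilityMeasure (μ.map (fun p : ℝ × ℝ => c * p.1)) :=
    Measure.isProbabilityMeasure_map m2.aemeasurable
  haveI : IsProbabilityMeasure (μ.map (Prod.snd : ℝ × ℝ → ℝ)) :=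
    Measure.isProbabilityMeasure_map measurable_snd.aemeasurable
  haveI : IsProbabilityMeasure (μ.map (Prod.fst : ℝ × ℝ → ℝ)) :=
    Measure.isProbabilityMeasure_map measurable_fst.aemeasurable
  set ν := μ.map (Prod.snd : ℝ × ℝ → ℝ) with hν
  set ρ := μ.map (Prod.fst : ℝ × ℝ → ℝ) with hρ
  have hK2 : (2:ℝ) ≤ max 2 (M + 1) := le_max_left _ _
  have hIPU : 0 ≤ ∫ u, hfun M u ∂PU := integral_nonneg (hfun_nonneg M)
  apply dBL_le_of_forall
  · have := dBL_nonneg ν (Measure.dirac c)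
    have := dBL_nonneg ρ PU
    nlinarith
  intro f a b h1 h2 h3
  rw [integral_map m1.aemeasurable h2.continuous.aestronglyMeasurable,
      integral_map m2.aemeasurable h2.continuous.aestronglyMeasurable]
  set K : ℝ := max 2 (M + 1) with hK
  have intF : Integrable (fun p : ℝ × ℝ => f (p.1 * p.2)) μ :=
    (integrable_const (a:ℝ)).mono'
      ((h2.continuous.comp (continuous_fst.mul continuous_snd)).aestronglyMeasurable)
      (Filter.Eventually.of_forall fun p => by simpa using h1 _)
  have intG : Integrable (fun p : ℝ × ℝ => f (c * p.1)) μ :=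
    (integrable_const (a:ℝ)).mono'
      ((h2.continuous.comp (continuous_const.mul continuous_fst)).aestronglyMeasurable)
      (Filter.Eventually.of_forall fun p => by simpa using h1 _)
  have intH : Integrable (fun p : ℝ × ℝ => K * gfun c p.2 + 2 * hfun M p.1) μ :=
    (integrable_const (K + 2 : ℝ)).mono'
      (((continuous_const.mul ((gfun_cont c).comp continuous_snd)).add
        (continuous_const.mul ((hfun_cont M).comp continuous_fst))).aestronglyMeasurable)
      (Filter.Eventually.of_forall fun p => by
        have g0 := gfun_nonneg c p.2; have g1 := gfun_le_one c p.2
        have hh0 := hfun_nonneg M p.1; have hh1 := hfun_le_one M p.1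
        rw [Real.norm_eq_abs, abs_of_nonneg (by nlinarith)]
        nlinarith)
  have pw : ∀ p : ℝ × ℝ, |f (p.1 * p.2) - f (c * p.1)| ≤
      K * gfun c p.2 + 2 * hfun M p.1 := by
    intro p
    calc |f (p.1 * p.2) - f (c * p.1)| ≤ min 2 (dist (p.1 * p.2) (c * p.1)) :=
          key_pointwise h1 h2 h3 _ _
      _ = min 2 (|p.1| * dist p.2 c) := by
          rw [Real.dist_eq, Real.dist_eq, ← abs_mul]
          ring_nf
      _ ≤ K * min 1 (dist p.2 c) + 2 * hfun M p.1 :=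
          key2 M hM p.1 _ dist_nonneg
      _ = K * gfun c p.2 + 2 * hfun M p.1 := rfl
  have step1 : |(∫ p, f (p.1 * p.2) ∂μ) - ∫ p, f (c * p.1) ∂μ| ≤
      ∫ p, (K * gfun c p.2 + 2 * hfun M p.1) ∂μ := by
    rw [← integral_sub intF intG]
    calc |∫ p, (f (p.1 * p.2) - f (c * p.1)) ∂μ| ≤
        ∫ p, |f (p.1 * p.2) - f (c * p.1)| ∂μ := by
          simpa [Real.norm_eq_abs] using
            norm_integral_le_integral_norm (fun p : ℝ × ℝ => f (p.1*p.2) - f (c*p.1)) (μ := μ)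
      _ ≤ _ := integral_mono (intF.sub intG).abs intH (fun p => pw p)
  have intg : Integrable (fun p : ℝ × ℝ => K * gfun c p.2) μ :=
    (integrable_const (K : ℝ)).mono'
      ((continuous_const.mul ((gfun_cont c).comp continuous_snd)).aestronglyMeasurable)
      (Filter.Eventually.of_forall fun p => by
        have g0 := gfun_nonneg c p.2; have g1 := gfun_le_one c p.2
        rw [Real.norm_eq_abs, abs_of_nonneg (by nlinarith)]; nlinarith)
  have inth : Integrable (fun p : ℝ × ℝ => 2 * hfun M p.1) μ :=
    (integrable_const (2 : ℝ)).mono'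
      ((continuous_const.mul ((hfun_cont M).comp continuous_fst)).aestronglyMeasurable)
      (Filter.Eventually.of_forall fun p => by
        have hh0 := hfun_nonneg M p.1; have hh1 := hfun_le_one M p.1
        rw [Real.norm_eq_abs, abs_of_nonneg (by nlinarith)]; nlinarith)
  have step2 : ∫ p : ℝ × ℝ, (K * gfun c p.2 + 2 * hfun M p.1) ∂μ =
      K * (∫ v, gfun c v ∂ν) + 2 * ∫ u, hfun M u ∂ρ := by
    rw [integral_add intg inth, integral_const_mul, integral_const_mul, hν, hρ,
      integral_map measurable_snd.aemeasurable (gfun_cont c).aestronglyMeasurable,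
      integral_map measurable_fst.aemeasurable (hfun_cont M).aestronglyMeasurable]
  have hg : ∫ v, gfun c v ∂ν ≤ 2 * dBL ν (Measure.dirac c) := gint_le ν c
  have hh : ∫ u, hfun M u ∂ρ ≤ (∫ u, hfun M u ∂PU) + 2 * dBL ρ PU :=
    integral_le_of_dBL ρ PU (hfun M) (hfun_nonneg M) (hfun_le_one M) (hfun_lip M)
  have hgnn : 0 ≤ ∫ v, gfun c v ∂ν := integral_nonneg (gfun_nonneg c)
  calc |(∫ p, f (p.1 * p.2) ∂μ) - ∫ p, f (c * p.1) ∂μ| ≤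
      ∫ p, (K * gfun c p.2 + 2 * hfun M p.1) ∂μ := step1
    _ = K * (∫ v, gfun c v ∂ν) + 2 * ∫ u, hfun M u ∂ρ := step2
    _ ≤ 2 * K * dBL ν (Measure.dirac c) + 4 * dBL ρ PU + 2 * ∫ u, hfun M u ∂PU := by
        nlinarith


lemma hfun_int_tendsto (PU : Measure ℝ) [IsProbabilityMeasure PU] :
    Tendsto (fun M : ℕ => ∫ u, hfun (M : ℝ) u ∂PU) atTop (nhds 0) := by
  have h := MeasureTheory.tendsto_integral_of_dominated_convergence (μ := PU)
    (F := fun M : ℕ => hfun (M : ℝ)) (f := fun _ => (0 : ℝ)) (bound := fun _ => (1 : ℝ))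
    (fun M => (hfun_cont (M : ℝ)).aestronglyMeasurable)
    (integrable_const 1)
    (fun M => Filter.Eventually.of_forall fun u => by
      rw [Real.norm_eq_abs, abs_of_nonneg (hfun_nonneg _ u)]; exact hfun_le_one _ u)
    (Filter.Eventually.of_forall fun u => by
      refine tendsto_const_nhds.congr' ?_
      filter_upwards [eventually_ge_atTop ⌈|u|⌉₊] with M hMn
      have hle : |u| ≤ (M : ℝ) := le_trans (Nat.le_ceil _) (by exact_mod_cast hMn)
      unfold hfun
      rw [max_eq_left (by linarith)]
      simp)
  simpa using h

/-- Conditional Slutsky lemma: if the conditional law of `Uₙ` converges in the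
bounded Lipschitz distance to a fixed law `Pᵁ` in probability, and the
conditional law of `Vₙ` converges to the Dirac mass at `c` in probability, then
conditionally `Uₙ + Vₙ` behaves like `Uₙ + c` and `Uₙ·Vₙ` like `c·Uₙ`. -/
theorem conditional_slutsky
    {Ω : Type*} [MeasurableSpace Ω] (P₀ : Measure Ω) [IsProbabilityMeasure P₀]
    (Pn : ℕ → Ω → Measure (ℝ × ℝ))
    (hPn : ∀ n ω, IsProbabilityMeasure (Pn n ω))
    (PU : Measure ℝ) [IsProbabilityMeasure PU] (c : ℝ)
    (hU : ∀ ε : ℝ, 0 < ε → Tendsto (fun n =>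
      P₀ {ω | ε ≤ dBL ((Pn n ω).map Prod.fst) PU}) atTop (nhds 0))
    (hV : ∀ ε : ℝ, 0 < ε → Tendsto (fun n =>
      P₀ {ω | ε ≤ dBL ((Pn n ω).map Prod.snd) (Measure.dirac c)}) atTop (nhds 0)) :
    (∀ ε : ℝ, 0 < ε → Tendsto (fun n =>
      P₀ {ω | ε ≤ dBL ((Pn n ω).map (fun p => p.1 + p.2))
        ((Pn n ω).map (fun p => p.1 + c))}) atTop (nhds 0)) ∧
    (∀ ε : ℝ, 0 < ε → Tendsto (fun n =>
      P₀ {ω | ε ≤ dBL ((Pn n ω).map (fun p => p.1 * p.2))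
        ((Pn n ω).map (fun p => c * p.1))}) atTop (nhds 0)) := by
  constructor
  · intro ε hε
    refine tendsto_of_tendsto_of_tendsto_of_le_of_le tendsto_const_nhds
      (hV (ε / 4) (by linarith)) (fun n => zero_le) (fun n => measure_mono ?_)
    intro ω hω
    simp only [Set.mem_setOf_eq] at hω ⊢
    haveI := hPn n ω
    have hb := dBL_sum_le (Pn n ω) c
    linarith
  · intro ε hε
    obtain ⟨M, hMI⟩ : ∃ M : ℕ, (∫ u, hfun (M : ℝ) u ∂PU) < ε / 8 := by
      have h := hfun_int_tendsto PU
      exact (h.eventually_lt_const (by linarith : (0:ℝ) < ε / 8)).exists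
    set K : ℝ := max 2 ((M : ℝ) + 1) with hK
    have hKpos : (0:ℝ) < K := lt_of_lt_of_le two_pos (le_max_left _ _)
    set δV : ℝ := ε / (8 * K) with hδV
    set δU : ℝ := ε / 16 with hδU
    have hδVpos : 0 < δV := by positivity
    have hδUpos : 0 < δU := by positivity
    have hsub : ∀ n, {ω | ε ≤ dBL ((Pn n ω).map (fun p => p.1 * p.2))
        ((Pn n ω).map (fun p => c * p.1))} ⊆
        {ω | δV ≤ dBL ((Pn n ω).map Prod.snd) (Measure.dirac c)} ∪
        {ω | δU ≤ dBL ((Pn n ω).map Prod.fst) PU} := by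
      intro n ω hω
      by_contra hc
      simp only [Set.mem_union, Set.mem_setOf_eq, not_or, not_le] at hc
      simp only [Set.mem_setOf_eq] at hω
      haveI := hPn n ω
      have hb := dBL_prod_le (Pn n ω) PU c (M : ℝ) (Nat.cast_nonneg M)
      have e1 : 2 * K * δV = ε / 4 := by
        rw [hδV]; field_simp; ring
      have h1 : 2 * K * dBL ((Pn n ω).map Prod.snd) (Measure.dirac c) < ε / 4 := by
        calc 2 * K * dBL ((Pn n ω).map Prod.snd) (Measure.dirac c) <
            2 * K * δV := by
              apply mul_lt_mul_of_pos_left hc.1 (by positivity)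
          _ = ε / 4 := e1
      have h2 : 4 * dBL ((Pn n ω).map Prod.fst) PU < ε / 4 := by
        have := hc.2; rw [hδU] at this; linarith
      linarith
    refine tendsto_of_tendsto_of_tendsto_of_le_of_le tendsto_const_nhds
      ?_ (fun n => zero_le)
      (fun n => le_trans (measure_mono (hsub n)) (measure_union_le _ _))
    have := (hV δV hδVpos).add (hU δU hδUpos)
    simpa using this
end
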